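/- Let B be a finite set of Boolean functions such that every function in B is monotone and such that each of the binary disjunction x ∨ y, the constant false, and the constant true is computed by some term over B. Then there exists a term over B in the two variables x and y that computes x ∨ y and in which each of the variables x and y occurs exactly once. -/

import Mathlib

/-- A Boolean operator/function: an arity `n` together with a function `Bool^n → Bool`. -/
abbrev BOp : Type := Σ n : ℕ, (Fin n → Bool) → Bool

/-- Terms over Boolean functions, in variables `x_0, …, x_{n-1}`. -/
inductive BTerm (n : ℕ) : Type where
  | var : Fin n → BTerm n
  | app : (o : BOp) → (Fin o.1 → BTerm n) → BTerm n

/-- The Boolean function computed by a term. -/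
def BTerm.eval {n : ℕ} (v : Fin n → Bool) : BTerm n → Bool
  | .var i => v i
  | .app o ts => o.2 (fun j => BTerm.eval v (ts j))

/-- `t.over B` : the term `t` uses only functions from `B`. -/
def BTerm.over {n : ℕ} (B : Set BOp) : BTerm n → Prop
  | .var _ => True
  | .app o ts => o ∈ B ∧ ∀ j, BTerm.over B (ts j)

/-- Number of occurrences of the variable `x_i` in the syntax tree of a term. -/
def BTerm.count {n : ℕ} (i : Fin n) : BTerm n → ℕ
  | .var j => if j = i then 1 else 0
  | .app _ ts => ∑ j, BTerm.count i (ts j)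

/-- A Boolean function is monotone (order-preserving w.r.t. `false < true` pointwise). -/
def monotoneOp (o : BOp) : Prop :=
  ∀ v w : Fin o.1 → Bool, (∀ i, v i ≤ w i) → o.2 v ≤ o.2 w

lemma eval_mono {n : ℕ} {B : Set BOp} (hmono : ∀ o ∈ B, monotoneOp o) :
    ∀ t : BTerm n, t.over B → ∀ v w : Fin n → Bool, (∀ j, v j ≤ w j) →
      t.eval v ≤ t.eval w
  | .var i, _, v, w, h => h i
  | .app o ts, ht, v, w, h =>
      hmono o ht.1 _ _ (fun j => eval_mono hmono (ts j) (ht.2 j) v w h)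

/-- substitute the term `s` for the variable `i`. -/
def BTerm.substVar {n : ℕ} (i : Fin n) (s : BTerm n) : BTerm n → BTerm n
  | .var j => if j = i then s else .var j
  | .app o ts => .app o (fun j => BTerm.substVar i s (ts j))

lemma substVar_eval {n : ℕ} (i : Fin n) (s : BTerm n) :
    ∀ (t : BTerm n) (v : Fin n → Bool),
      BTerm.eval v (BTerm.substVar i s t) = BTerm.eval (Function.update v i (BTerm.eval v s)) t
  | .var j, v => by
      by_cases h : j = i
      · subst h; simp [BTerm.substVar, BTerm.eval]
      · simp [BTerm.substVar, h, BTerm.eval, Function.update_of_ne h]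
  | .app o ts, v => by
      simp only [BTerm.substVar, BTerm.eval]
      exact congrArg o.2 (funext fun j => substVar_eval i s (ts j) v)

lemma substVar_over {n : ℕ} {B : Set BOp} (i : Fin n) {s : BTerm n} (hs : BTerm.over B s) :
    ∀ t : BTerm n, BTerm.over B t → BTerm.over B (BTerm.substVar i s t)
  | .var j, _ => by
      by_cases h : j = i
      · simp only [BTerm.substVar, if_pos h]; exact hs
      · simp only [BTerm.substVar, if_neg h]; trivial
  | .app o ts, ht => ⟨ht.1, fun j => substVar_over i hs (ts j) (ht.2 j)⟩

lemma substVar_count {n : ℕ} (i : Fin n) (s : BTerm n) (hs : ∀ j, BTerm.count j s = 0)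
    (j : Fin n) :
    ∀ t : BTerm n, BTerm.count j (BTerm.substVar i s t) = if j = i then 0 else BTerm.count j t
  | .var j' => by
      by_cases h : j' = i
      · subst h
        by_cases h2 : j = j'
        · subst h2; simp [BTerm.substVar, hs]
        · simp [BTerm.substVar, hs, h2, BTerm.count, Ne.symm h2]
      · by_cases h2 : j = i
        · subst h2
          simp [BTerm.substVar, if_neg h, BTerm.count, fun hh : j' = j => h hh]
        · simp [BTerm.substVar, if_neg h, BTerm.count, h2]
  | .app o ts => by
      simp only [BTerm.substVar, BTerm.count]
      rw [Finset.sum_congr rfl (fun j' _ => substVar_count i s hs j (ts j'))]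
      by_cases h2 : j = i <;> simp [h2]

/-- Lift a closed term (0 variables) to `n` variables. -/
def liftT {n : ℕ} : BTerm 0 → BTerm n
  | .var i => i.elim0
  | .app o ts => .app o (fun j => liftT (ts j))

lemma liftT_eval {n : ℕ} : ∀ (t : BTerm 0) (v : Fin n → Bool),
    BTerm.eval v (liftT t) = BTerm.eval (Fin.elim0) t
  | .var i, _ => i.elim0
  | .app o ts, v => by
      simp only [liftT, BTerm.eval]
      exact congrArg o.2 (funext fun j => liftT_eval (ts j) v)

lemma liftT_over {n : ℕ} {B : Set BOp} : ∀ t : BTerm 0, BTerm.over B t →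
    BTerm.over B (liftT (n := n) t)
  | .var i, _ => i.elim0
  | .app o ts, ht => ⟨ht.1, fun j => liftT_over (ts j) (ht.2 j)⟩

lemma liftT_count {n : ℕ} (j : Fin n) : ∀ t : BTerm 0, BTerm.count j (liftT t) = 0
  | .var i => i.elim0
  | .app o ts => by
      simp only [liftT, BTerm.count]
      exact Finset.sum_eq_zero (fun j' _ => liftT_count j (ts j'))

lemma exists_switch (F : ℕ → Bool) : ∀ m : ℕ, F 0 = false → F m = true →
    ∃ k, k < m ∧ F k = false ∧ F (k + 1) = true := by
  intro m
  induction m with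
  | zero => intro h0 h1; rw [h0] at h1; exact absurd h1 (by simp)
  | succ m ih =>
      intro h0 h1
      cases hm : F m with
      | false => exact ⟨m, Nat.lt_succ_self m, hm, h1⟩
      | true =>
          obtain ⟨k, hk, h⟩ := ih h0 hm
          exact ⟨k, hk.trans (Nat.lt_succ_self m), h⟩

lemma update_le {n : ℕ} (v : Fin n → Bool) (i : Fin n) (j : Fin n) :
    Function.update v i false j ≤ Function.update v i true j := by
  by_cases h : j = i
  · subst h; simp
  · simp [Function.update_of_ne h]

lemma crit {n : ℕ} {B : Set BOp} (hmono : ∀ o ∈ B, monotoneOp o)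
    {cf ct : BTerm n} (hcf : BTerm.over B cf) (hct : BTerm.over B ct)
    (hcfe : ∀ v, BTerm.eval v cf = false) (hcte : ∀ v, BTerm.eval v ct = true)
    (hcfc : ∀ j, BTerm.count j cf = 0) (hctc : ∀ j, BTerm.count j ct = 0)
    (i : Fin n) (w : Fin n → Bool) :
    ∀ t : BTerm n, BTerm.over B t →
      BTerm.eval (Function.update w i false) t = false →
      BTerm.eval (Function.update w i true) t = true →
      ∃ u : BTerm n, BTerm.over B u ∧ BTerm.count i u = 1 ∧
        (∀ j, j ≠ i → BTerm.count j u = BTerm.count j t) ∧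
        BTerm.eval (Function.update w i false) u = false ∧
        BTerm.eval (Function.update w i true) u = true ∧
        (∀ v, BTerm.eval (Function.update v i false) t ≤
              BTerm.eval (Function.update v i false) u) ∧
        (∀ v, BTerm.eval (Function.update v i true) u ≤
              BTerm.eval (Function.update v i true) t)
  | .var j', _, h0, h1 => by
      by_cases h : j' = i
      · subst h
        refine ⟨.var j', trivial, by simp [BTerm.count], fun j hj => by
            simp [BTerm.count], by simp [BTerm.eval], by simp [BTerm.eval],
            fun v => le_refl _, fun v => le_refl _⟩
      · exfalso
        simp only [BTerm.eval, Function.update_of_ne h] at h0 h1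
        rw [h0] at h1
        exact Bool.false_ne_true h1
  | .app o ts, ho, h0, h1 => by
      classical
      set F : ℕ → Bool :=
        fun k => o.2 (fun j => BTerm.eval (Function.update w i (decide ((j : ℕ) < k))) (ts j))
        with hFdef
      have hF0 : F 0 = false := by
        rw [hFdef]
        simpa [BTerm.eval] using h0
      have hFm : F o.1 = true := by
        rw [hFdef]
        have h : (fun j : Fin o.1 =>
            BTerm.eval (Function.update w i (decide ((j : ℕ) < o.1))) (ts j)) =
            fun j => BTerm.eval (Function.update w i true) (ts j) :=
          funext fun j => by simp [j.isLt]
        simp only [h]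
        exact h1
      obtain ⟨k, hk, hFk, hFk1⟩ := exists_switch F o.1 hF0 hFm
      have hjcv : ((⟨k, hk⟩ : Fin o.1) : ℕ) = k := rfl
      -- criticality of child ⟨k, hk⟩
      have heqF : BTerm.eval (Function.update w i false) (ts ⟨k, hk⟩) =
          BTerm.eval (Function.update w i true) (ts ⟨k, hk⟩) → False := by
        intro heq
        have hcong : F k = F (k + 1) := by
          rw [hFdef]
          refine congrArg o.2 (funext fun j => ?_)
          by_cases h1j : (j : ℕ) < k
          · have h2j : (j : ℕ) < k + 1 := Nat.lt_succ_of_lt h1j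
            rw [decide_eq_true h1j, decide_eq_true h2j]
          · by_cases h2j : (j : ℕ) < k + 1
            · have hjk : j = ⟨k, hk⟩ := Fin.ext (show (j : ℕ) = k by omega)
              rw [decide_eq_false h1j, decide_eq_true h2j, hjk]
              exact heq
            · rw [decide_eq_false h1j, decide_eq_false h2j]
        rw [hFk, hFk1] at hcong
        exact Bool.false_ne_true hcong
      have hle := eval_mono hmono (ts ⟨k, hk⟩) (ho.2 ⟨k, hk⟩) _ _ (update_le w i)
      have hcrit : BTerm.eval (Function.update w i false) (ts ⟨k, hk⟩) = false ∧
          BTerm.eval (Function.update w i true) (ts ⟨k, hk⟩) = true := by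
        cases hA : BTerm.eval (Function.update w i false) (ts ⟨k, hk⟩) <;>
          cases hB : BTerm.eval (Function.update w i true) (ts ⟨k, hk⟩)
        · exact absurd (hA.trans hB.symm) (fun h => heqF h)
        · exact ⟨rfl, rfl⟩
        · rw [hA, hB] at hle; exact absurd hle (by simp)
        · exact absurd (hA.trans hB.symm) (fun h => heqF h)
      obtain ⟨uc, hucov, hucci, huccj, huc0, huc1, hucl, hucr⟩ :=
        crit hmono hcf hct hcfe hcte hcfc hctc i w (ts ⟨k, hk⟩) (ho.2 ⟨k, hk⟩)
          hcrit.1 hcrit.2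
      -- the new children
      set ch : Fin o.1 → BTerm n := fun j =>
        if (j : ℕ) < k then BTerm.substVar i ct (ts j)
        else if (j : ℕ) = k then uc else BTerm.substVar i cf (ts j) with hch
      have hchlt : ∀ j : Fin o.1, (j : ℕ) < k → ch j = BTerm.substVar i ct (ts j) := by
        intro j hj
        rw [hch]
        exact if_pos hj
      have hchjc : ch ⟨k, hk⟩ = uc := by
        rw [hch]
        show (if k < k then _ else if k = k then uc else _) = uc
        rw [if_neg (Nat.lt_irrefl k), if_pos rfl]
      have hchgt : ∀ j : Fin o.1, ¬ ((j : ℕ) < k) → (j : ℕ) ≠ k →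
          ch j = BTerm.substVar i cf (ts j) := by
        intro j hj hj2
        rw [hch]
        show (if (j : ℕ) < k then _ else if (j : ℕ) = k then _ else
          BTerm.substVar i cf (ts j)) = BTerm.substVar i cf (ts j)
        rw [if_neg hj, if_neg hj2]
      refine ⟨.app o ch, ⟨ho.1, fun j => ?_⟩, ?_, ?_, ?_, ?_, ?_, ?_⟩
      · by_cases h1j : (j : ℕ) < k
        · rw [hchlt j h1j]; exact substVar_over i hct (ts j) (ho.2 j)
        · by_cases h2j : (j : ℕ) = k
          · rw [(show _ = (⟨k, hk⟩ : Fin o.1) from Fin.ext h2j), hchjc]; exact hucov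
          · rw [hchgt j h1j h2j]; exact substVar_over i hcf (ts j) (ho.2 j)
      · -- count i = 1
        show (∑ j, BTerm.count i (ch j)) = 1
        rw [Finset.sum_eq_single_of_mem ⟨k, hk⟩ (Finset.mem_univ _)]
        · rw [hchjc]; exact hucci
        · intro b _ hb
          have hbk : (b : ℕ) ≠ k := fun h => hb (Fin.ext h)
          by_cases h1j : (b : ℕ) < k
          · rw [hchlt b h1j, substVar_count i ct hctc i (ts b), if_pos rfl]
          · rw [hchgt b h1j hbk, substVar_count i cf hcfc i (ts b), if_pos rfl]
      · -- other counts preserved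
        intro j hj
        show (∑ j', BTerm.count j (ch j')) = ∑ j', BTerm.count j (ts j')
        refine Finset.sum_congr rfl fun b _ => ?_
        by_cases h1j : (b : ℕ) < k
        · rw [hchlt b h1j, substVar_count i ct hctc j (ts b), if_neg hj]
        · by_cases h2j : (b : ℕ) = k
          · rw [(show _ = (⟨k, hk⟩ : Fin o.1) from Fin.ext h2j), hchjc, huccj j hj]
          · rw [hchgt b h1j h2j, substVar_count i cf hcfc j (ts b), if_neg hj]
      · -- eval at update w i false
        show o.2 (fun j => BTerm.eval (Function.update w i false) (ch j)) = false
        have hvec : (fun j => BTerm.eval (Function.update w i false) (ch j)) =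
            (fun j : Fin o.1 =>
              BTerm.eval (Function.update w i (decide ((j : ℕ) < k))) (ts j)) := by
          refine funext fun j => ?_
          by_cases h1j : (j : ℕ) < k
          · rw [hchlt j h1j, decide_eq_true h1j, substVar_eval, hcte, Function.update_idem]
          · by_cases h2j : (j : ℕ) = k
            · rw [(show _ = (⟨k, hk⟩ : Fin o.1) from Fin.ext h2j), hchjc, decide_eq_false (h2j ▸ Nat.lt_irrefl k), huc0]
              exact hcrit.1.symm
            · rw [hchgt j h1j h2j, decide_eq_false h1j, substVar_eval, hcfe,
                Function.update_idem]
        rw [hvec]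
        exact hFk
      · -- eval at update w i true
        show o.2 (fun j => BTerm.eval (Function.update w i true) (ch j)) = true
        have hvec : (fun j => BTerm.eval (Function.update w i true) (ch j)) =
            (fun j : Fin o.1 =>
              BTerm.eval (Function.update w i (decide ((j : ℕ) < k + 1))) (ts j)) := by
          refine funext fun j => ?_
          by_cases h1j : (j : ℕ) < k
          · rw [hchlt j h1j, decide_eq_true (Nat.lt_succ_of_lt h1j), substVar_eval, hcte,
              Function.update_idem]
          · by_cases h2j : (j : ℕ) = k
            · rw [(show _ = (⟨k, hk⟩ : Fin o.1) from Fin.ext h2j), hchjc, decide_eq_true (show ((⟨k, hk⟩ : Fin o.1) : ℕ) < k + 1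
                from Nat.lt_succ_self k), huc1]
              exact hcrit.2.symm
            · have h3j : ¬ ((j : ℕ) < k + 1) := by omega
              rw [hchgt j h1j h2j, decide_eq_false h3j, substVar_eval, hcfe,
                Function.update_idem]
        rw [hvec]
        exact hFk1
      · -- lower sandwich
        intro v
        refine hmono o ho.1 _ _ (fun j => ?_)
        show BTerm.eval (Function.update v i false) (ts j) ≤
          BTerm.eval (Function.update v i false) (ch j)
        by_cases h1j : (j : ℕ) < k
        · rw [hchlt j h1j, substVar_eval, hcte, Function.update_idem]
          exact eval_mono hmono (ts j) (ho.2 j) _ _ (update_le v i)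
        · by_cases h2j : (j : ℕ) = k
          · rw [(show _ = (⟨k, hk⟩ : Fin o.1) from Fin.ext h2j), hchjc]
            exact hucl v
          · rw [hchgt j h1j h2j, substVar_eval, hcfe, Function.update_idem]
      · -- upper sandwich
        intro v
        refine hmono o ho.1 _ _ (fun j => ?_)
        show BTerm.eval (Function.update v i true) (ch j) ≤
          BTerm.eval (Function.update v i true) (ts j)
        by_cases h1j : (j : ℕ) < k
        · rw [hchlt j h1j, substVar_eval, hcte, Function.update_idem]
        · by_cases h2j : (j : ℕ) = k
          · rw [(show _ = (⟨k, hk⟩ : Fin o.1) from Fin.ext h2j), hchjc]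
            exact hucr v
          · rw [hchgt j h1j h2j, substVar_eval, hcfe, Function.update_idem]
            exact eval_mono hmono (ts j) (ho.2 j) _ _ (update_le v i)

/-- if `B` is a finite set of monotone Boolean functions such that binary
disjunction, the constant `false`, and the constant `true` are each computed by some term
over `B`, then some term over `B` computes `x ∨ y` with each variable occurring exactly once. -/
theorem stmt_13 (B : Set BOp) (hfin : B.Finite)
    (hmono : ∀ o ∈ B, monotoneOp o)
    (hor : ∃ t : BTerm 2, t.over B ∧ ∀ v, t.eval v = (v 0 || v 1))
    (hfalse : ∃ t : BTerm 0, t.over B ∧ ∀ v, t.eval v = false)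
    (htrue : ∃ t : BTerm 0, t.over B ∧ ∀ v, t.eval v = true) :
    ∃ t : BTerm 2, t.over B ∧ (∀ v, t.eval v = (v 0 || v 1)) ∧
      t.count 0 = 1 ∧ t.count 1 = 1 := by
  obtain ⟨t, htov, hte⟩ := hor
  obtain ⟨f0, hf0ov, hf0e⟩ := hfalse
  obtain ⟨t0, ht0ov, ht0e⟩ := htrue
  set cf : BTerm 2 := liftT f0 with hcf
  set ct : BTerm 2 := liftT t0 with hct
  have hcfov : BTerm.over B cf := liftT_over f0 hf0ov
  have hctov : BTerm.over B ct := liftT_over t0 ht0ov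
  have hcfe : ∀ v, BTerm.eval v cf = false := fun v => by rw [hcf, liftT_eval]; exact hf0e _
  have hcte : ∀ v, BTerm.eval v ct = true := fun v => by rw [hct, liftT_eval]; exact ht0e _
  have hcfc : ∀ j, BTerm.count j cf = 0 := fun j => liftT_count j f0
  have hctc : ∀ j, BTerm.count j ct = 0 := fun j => liftT_count j t0
  set w : Fin 2 → Bool := fun _ => false with hw
  have hw00 : Function.update w 0 false = w := by
    funext j; fin_cases j <;> simp [hw]
  have hw01 : ∀ v : Fin 2 → Bool, v 0 = false → v 1 = false →
      v = Function.update w 0 false := by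
    intro v h0 h1; funext j; fin_cases j <;> simp [hw, h0, h1]
  -- Step 1: isolate variable 0
  have h0 : BTerm.eval (Function.update w 0 false) t = false := by
    rw [hte]; simp [hw00, hw]
  have h1 : BTerm.eval (Function.update w 0 true) t = true := by
    rw [hte]; simp
  obtain ⟨u, huov, huc0, hucj, hu0, hu1, hul, hur⟩ :=
    crit hmono hcfov hctov hcfe hcte hcfc hctc 0 w t htov h0 h1
  have huor : ∀ v, BTerm.eval v u = (v 0 || v 1) := by
    intro v
    cases hv0 : v 0 <;> cases hv1 : v 1
    · rw [hw01 v hv0 hv1]; rw [hu0]; simp [hw]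
    · have hvv : Function.update v 0 false = v := by
        rw [← hv0]; exact Function.update_eq_self 0 v
      have := hul v
      rw [hvv, hte] at this
      rw [hv0, hv1] at this
      simp only [Bool.false_or] at this ⊢
      exact le_antisymm (Bool.le_true _) this
    · have hvw : Function.update w 0 true = Function.update v 0 true := by
        funext j; fin_cases j <;> simp [hw, hv1]
      have hvv : Function.update v 0 true = v := by
        rw [← hv0]; exact Function.update_eq_self 0 v
      rw [hvw, hvv] at hu1
      rw [hu1]; simp
    · have hle := eval_mono hmono u huov (Function.update w 0 true) v (by
        intro j; fin_cases j <;> simp [hw, hv0, hv1])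
      rw [hu1] at hle
      simp only [hv0, Bool.true_or]
      exact le_antisymm (Bool.le_true _) hle
  -- Step 2: isolate variable 1
  have h0' : BTerm.eval (Function.update w 1 false) u = false := by
    rw [huor]; simp [hw]
  have h1' : BTerm.eval (Function.update w 1 true) u = true := by
    rw [huor]; simp [hw]
  obtain ⟨z, hzov, hzc1, hzcj, hz0, hz1, hzl, hzr⟩ :=
    crit hmono hcfov hctov hcfe hcte hcfc hctc 1 w u huov h0' h1'
  have hzor : ∀ v, BTerm.eval v z = (v 0 || v 1) := by
    intro v
    cases hv0 : v 0 <;> cases hv1 : v 1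
    · have : v = Function.update w 1 false := by
        funext j; fin_cases j <;> simp [hw, hv0, hv1]
      rw [this, hz0]; simp [hw]
    · have hvw : Function.update w 1 true = v := by
        funext j; fin_cases j <;> simp [hw, hv0, hv1]
      rw [hvw] at hz1
      rw [hz1]; simp [hv0, hv1]
    · have hvv : Function.update v 1 false = v := by
        rw [← hv1]; exact Function.update_eq_self 1 v
      have := hzl v
      rw [hvv, huor] at this
      rw [hv0, hv1] at this
      simp only [Bool.or_false] at this ⊢
      exact le_antisymm (Bool.le_true _) this
    · have hle := eval_mono hmono z hzov (Function.update w 1 true) v (by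
        intro j; fin_cases j <;> simp [hw, hv0, hv1])
      rw [hz1] at hle
      simp only [hv0, Bool.true_or]
      exact le_antisymm (Bool.le_true _) hle
  exact ⟨z, hzov, hzor, by rw [hzcj 0 (by decide), huc0], hzc1⟩
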